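/- arXiv:1207.5447 — 3 statements merged into one kernel-verified Lean document; each statement's English description precedes it below -/
import Mathlib

section
/- Let (T, D(T)) be a closed antisymmetric densely defined operator on a Hilbert space H and P an orthogonal projection with P(D) ⊂ D(T) for a dense subspace D ⊂ D(T), and assume PTP = 0 on D. Define B = (I + (TP)*TP)^{-1}(TP)* on D((TP)*). Then for all f ∈ D, ‖Bf‖ ≤ (1/2)‖(I − P)f‖. -/
open LinearPMap

/-- The composition `T ∘ L` of an unbounded operator `T` with an everywhere-defined bounded
operator `L`, with domain `{f | L f ∈ D(T)}`. -/
noncomputable def pmapCompCLM {H : Type*} [NormedAddCommGroup H] [InnerProductSpace ℝ H]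
    (T : H →ₗ.[ℝ] H) (L : H →L[ℝ] H) : H →ₗ.[ℝ] H where
  domain := T.domain.comap (L : H →ₗ[ℝ] H)
  toFun :=
    { toFun := fun f => T ⟨L f.1, f.2⟩
      map_add' := fun x y => by
        have h : (⟨L (x + y).1, (x + y).2⟩ : T.domain)
            = ⟨L x.1, x.2⟩ + ⟨L y.1, y.2⟩ := Subtype.ext (by simp)
        show T ⟨L (x + y).1, (x + y).2⟩ = T ⟨L x.1, x.2⟩ + T ⟨L y.1, y.2⟩
        rw [h, T.map_add]
      map_smul' := fun c x => by
        have h : (⟨L (c • x).1, (c • x).2⟩ : T.domain)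
            = c • (⟨L x.1, x.2⟩ : T.domain) := Subtype.ext (by simp)
        show T ⟨L (c • x).1, (c • x).2⟩ = c • T ⟨L x.1, x.2⟩
        rw [h, T.map_smul] }

open RealInnerProductSpace

/-- With `T` closed antisymmetric, `P` an orthogonal projection, `D ⊆ D(T)` dense with
`P(D) ⊆ D(T)` and `PTP = 0` on `D`, the operator `B = (I + (TP)*TP)⁻¹ (TP)*`
(characterized on `D((TP)*)` by `Bf + (TP)*(TP(Bf)) = (TP)* f`) satisfies
`‖Bf‖ ≤ (1/2)‖(I - P)f‖` for all `f ∈ D`. -/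
theorem stmt4 {H : Type*} [NormedAddCommGroup H] [InnerProductSpace ℝ H] [CompleteSpace H]
    (T : H →ₗ.[ℝ] H) (hdense : Dense (T.domain : Set H)) (hclosed : T.IsClosed)
    (hanti : ∀ f g : T.domain, ⟪T f, (g : H)⟫ = -⟪(f : H), T g⟫)
    (P : H →L[ℝ] H) (hProj : ∀ x, P (P x) = P x)
    (hPsym : ∀ x y : H, ⟪P x, y⟫ = ⟪x, P y⟫)
    (D : Submodule ℝ H) (hDT : D ≤ T.domain) (hDdense : Dense (D : Set H))
    (hPD : ∀ f (hf : f ∈ D), P f ∈ T.domain)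
    (hPTP : ∀ f (hf : f ∈ D), P (T ⟨P f, hPD f hf⟩) = 0)
    (B : H → H)
    (hB : ∀ f (hf : f ∈ (pmapCompCLM T P).adjoint.domain),
      ∃ (h1 : B f ∈ (pmapCompCLM T P).domain)
        (h2 : (pmapCompCLM T P) ⟨B f, h1⟩ ∈ (pmapCompCLM T P).adjoint.domain),
        B f + (pmapCompCLM T P).adjoint ⟨(pmapCompCLM T P) ⟨B f, h1⟩, h2⟩
          = (pmapCompCLM T P).adjoint ⟨f, hf⟩) :
    ∀ f ∈ D, ‖B f‖ ≤ (1 / 2) * ‖f - P f‖ := by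
  intro f hf
  set S := pmapCompCLM T P with hSdef
  have hDS : ∀ g ∈ D, g ∈ S.domain := fun g hg => hPD g hg
  have hSdense : Dense (S.domain : Set H) := hDdense.mono fun x hx => hDS x hx
  -- f is in the adjoint domain
  have hfadj : f ∈ S.adjoint.domain := by
    apply LinearPMap.mem_adjoint_domain_of_exists
    refine ⟨-(P (T ⟨f, hDT hf⟩)), fun x => ?_⟩
    have hx : P (x : H) ∈ T.domain := x.2
    have hSx : S x = T ⟨P (x : H), hx⟩ := rfl
    have h1 : ⟪T ⟨f, hDT hf⟩, ((⟨P (x : H), hx⟩ : T.domain) : H)⟫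
        = -⟪f, T ⟨P (x : H), hx⟩⟫ := hanti _ _
    have h2 : ⟪P (T ⟨f, hDT hf⟩), (x : H)⟫ = ⟪T ⟨f, hDT hf⟩, P (x : H)⟫ := hPsym _ _
    rw [hSx, inner_neg_left, h2]
    simp only [Submodule.coe_mk] at h1 ⊢
    linarith [h1]
  obtain ⟨h1, h2, heq⟩ := hB f hfadj
  set u := B f with hu
  set Su := S ⟨u, h1⟩ with hSu
  have formal := LinearPMap.adjoint_isFormalAdjoint hSdense
  have eA : ⟪S.adjoint ⟨Su, h2⟩, u⟫ = ⟪Su, Su⟫ := formal ⟨Su, h2⟩ ⟨u, h1⟩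
  have eB : ⟪S.adjoint ⟨f, hfadj⟩, u⟫ = ⟪f, Su⟫ := formal ⟨f, hfadj⟩ ⟨u, h1⟩
  have eC : ⟪P f, Su⟫ = 0 := by
    have hPu : P u ∈ T.domain := h1
    have hSu' : Su = T ⟨P u, hPu⟩ := rfl
    have h3 : ⟪T ⟨P f, hPD f hf⟩, ((⟨P u, hPu⟩ : T.domain) : H)⟫
        = -⟪P f, T ⟨P u, hPu⟩⟫ := hanti _ _
    have h4 : ⟪P (T ⟨P f, hPD f hf⟩), u⟫ = ⟪T ⟨P f, hPD f hf⟩, P u⟫ := hPsym _ _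
    rw [hPTP f hf, inner_zero_left] at h4
    rw [hSu']
    have := h3.symm.trans (by simpa using h4.symm)
    linarith [this]
  have e1 : ⟪u, u⟫ + ⟪Su, Su⟫ = ⟪f, Su⟫ := by
    have := congrArg (fun v => ⟪v, u⟫) heq
    simp only [inner_add_left] at this
    linarith [this, eA, eB]
  have e2 : ⟪f, Su⟫ = ⟪f - P f, Su⟫ := by
    rw [inner_sub_left, eC]; ring
  have e3 : ⟪f - P f, Su⟫ ≤ ‖f - P f‖ * ‖Su‖ := real_inner_le_norm _ _
  have hnu : ⟪u, u⟫ = ‖u‖ ^ 2 := real_inner_self_eq_norm_sq u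
  have hnS : ⟪Su, Su⟫ = ‖Su‖ ^ 2 := real_inner_self_eq_norm_sq Su
  have key : ‖u‖ ^ 2 + ‖Su‖ ^ 2 ≤ ‖f - P f‖ * ‖Su‖ := by
    rw [← hnu, ← hnS, e1, e2]; exact e3
  nlinarith [sq_nonneg (‖Su‖ - ‖f - P f‖ / 2), norm_nonneg u, norm_nonneg (f - P f),
    norm_nonneg Su, sq_nonneg (‖u‖ + ‖f - P f‖ / 2)]
end

section
/- Let (T, D(T)) be a closed antisymmetric densely defined operator on a Hilbert space H and P an orthogonal projection with P(D) ⊂ D(T) for a dense subspace D ⊂ D(T), and assume PTP = 0 on D. With B = (I + (TP)*TP)^{-1}(TP)* on D((TP)*), the operator TB is defined on D and satisfies ‖TBf‖ ≤ ‖(I − P)f‖ for all f ∈ D. -/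
open LinearPMap

open RealInnerProductSpace

/-- In the same setting (`T` closed antisymmetric, `P` orthogonal projection, `D ⊆ D(T)` dense
with `P(D) ⊆ D(T)`, `PTP = 0` on `D`, and `B = (I + (TP)*TP)⁻¹ (TP)*`), the operator `TB`
is defined on `D` (as `TP(Bf)`, since `PB = B`) and `‖TBf‖ ≤ ‖(I - P)f‖` for all `f ∈ D`. -/
theorem stmt5 {H : Type*} [NormedAddCommGroup H] [InnerProductSpace ℝ H] [CompleteSpace H]
    (T : H →ₗ.[ℝ] H) (hdense : Dense (T.domain : Set H)) (hclosed : T.IsClosed)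
    (hanti : ∀ f g : T.domain, ⟪T f, (g : H)⟫ = -⟪(f : H), T g⟫)
    (P : H →L[ℝ] H) (hProj : ∀ x, P (P x) = P x)
    (hPsym : ∀ x y : H, ⟪P x, y⟫ = ⟪x, P y⟫)
    (D : Submodule ℝ H) (hDT : D ≤ T.domain) (hDdense : Dense (D : Set H))
    (hPD : ∀ f (hf : f ∈ D), P f ∈ T.domain)
    (hPTP : ∀ f (hf : f ∈ D), P (T ⟨P f, hPD f hf⟩) = 0)
    (B : H → H)
    (hB : ∀ f (hf : f ∈ (pmapCompCLM T P).adjoint.domain),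
      ∃ (h1 : B f ∈ (pmapCompCLM T P).domain)
        (h2 : (pmapCompCLM T P) ⟨B f, h1⟩ ∈ (pmapCompCLM T P).adjoint.domain),
        B f + (pmapCompCLM T P).adjoint ⟨(pmapCompCLM T P) ⟨B f, h1⟩, h2⟩
          = (pmapCompCLM T P).adjoint ⟨f, hf⟩) :
    ∀ f, f ∈ D → ∀ h1 : B f ∈ (pmapCompCLM T P).domain,
      ‖(pmapCompCLM T P) ⟨B f, h1⟩‖ ≤ ‖f - P f‖ := by
  intro f hf h1
  set S := pmapCompCLM T P with hS
  have hDS : D ≤ S.domain := fun g hg => hPD g hg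
  have hSdense : Dense (S.domain : Set H) :=
    hDdense.mono hDS
  -- f is in the adjoint domain
  have hadj : f ∈ S.adjoint.domain := by
    apply S.mem_adjoint_domain_of_exists
    refine ⟨-P (T ⟨f, hDT hf⟩), fun x => ?_⟩
    have hx : S x = T ⟨P (x : H), x.2⟩ := rfl
    rw [hx, inner_neg_left, hPsym]
    have h2 : ⟪(T ⟨f, hDT hf⟩ : H), P (x : H)⟫
        = -⟪f, (T ⟨P (x : H), x.2⟩ : H)⟫ := hanti ⟨f, hDT hf⟩ ⟨P (x : H), x.2⟩
    rw [h2, neg_neg]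
  obtain ⟨h1', h2', heq⟩ := hB f hadj
  -- proofs of membership are irrelevant
  have hirr : (⟨B f, h1⟩ : S.domain) = ⟨B f, h1'⟩ := rfl
  set v : H := S ⟨B f, h1⟩ with hv
  have hfa : S.adjoint.IsFormalAdjoint S := S.adjoint_isFormalAdjoint hSdense
  -- key inner product identity
  have key : ‖v‖ ^ 2 + ‖B f‖ ^ 2 = ⟪v, f⟫ := by
    have e1 : ⟪S.adjoint ⟨S ⟨B f, h1'⟩, h2'⟩, B f⟫ = ⟪v, v⟫ := by
      have := hfa ⟨S ⟨B f, h1'⟩, h2'⟩ ⟨B f, h1⟩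
      rw [this]
    have e2 : ⟪S.adjoint ⟨f, hadj⟩, B f⟫ = ⟪f, v⟫ := hfa ⟨f, hadj⟩ ⟨B f, h1⟩
    have e3 : ⟪B f + S.adjoint ⟨S ⟨B f, h1'⟩, h2'⟩, B f⟫ = ⟪f, v⟫ := by rw [heq, e2]
    rw [inner_add_left, e1] at e3
    rw [real_inner_self_eq_norm_sq, real_inner_self_eq_norm_sq] at e3
    rw [real_inner_comm] at e3
    linarith
  -- orthogonality to P f
  have hvP : ⟪v, P f⟫ = 0 := by
    have hv' : v = T ⟨P (B f), h1⟩ := rfl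
    rw [hv']
    have h3 : ⟪(T ⟨P (B f), h1⟩ : H), P f⟫
        = -⟪P (B f), (T ⟨P f, hPD f hf⟩ : H)⟫ := hanti ⟨P (B f), h1⟩ ⟨P f, hPD f hf⟩
    rw [h3, hPsym, hPTP f hf, inner_zero_right, neg_zero]
  have hbound : ‖v‖ ^ 2 ≤ ⟪v, f - P f⟫ := by
    rw [inner_sub_right, hvP, sub_zero, ← key]
    nlinarith [sq_nonneg ‖B f‖]
  have hcs : ⟪v, f - P f⟫ ≤ ‖v‖ * ‖f - P f‖ := real_inner_le_norm v (f - P f)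
  rcases eq_or_lt_of_le (norm_nonneg v) with h0 | h0
  · rw [← h0]; exact norm_nonneg _
  · have : ‖v‖ * ‖v‖ ≤ ‖v‖ * ‖f - P f‖ := by nlinarith
    exact le_of_mul_le_mul_left this h0
end

section
/- Let (K, D) be an essentially m-dissipative operator on a Hilbert space H and let (T, D) be dissipative on the same domain. Suppose there exist constants c₁ ∈ ℝ and c₂ ≥ 0 such that ‖Tf‖² ≤ c₁(Kf, f)_H + c₂‖f‖² for all f ∈ D. Then (K + T, D) is essentially m-dissipative on H. -/
open RealInnerProductSpace

/-- One continuation step: if `(1 - (K + s•T))(D)` is dense and `T` is uniformly bounded by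
`M * ‖(1 - (K + s•T))f‖`, then for `|t - s| * M < 1` the range `(1 - (K + t•T))(D)` is dense. -/
lemma stmt16_step {H : Type*} [NormedAddCommGroup H] [InnerProductSpace ℝ H]
    (D : Submodule ℝ H) (K T : D →ₗ[ℝ] H) (M s t : ℝ) (hM0 : 0 ≤ M)
    (hM : ∀ f : D, ‖T f‖ ≤ M * ‖(f : H) - (K f + s • T f)‖)
    (hq : |t - s| * M < 1)
    (hdense : Dense (Set.range fun f : D => (f : H) - (K f + s • T f))) :
    Dense (Set.range fun f : D => (f : H) - (K f + t • T f)) := by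
  set q : ℝ := |t - s| * M with hqdef
  have hq0 : 0 ≤ q := mul_nonneg (abs_nonneg _) hM0
  set R : Set H := Set.range fun f : D => (f : H) - (K f + t • T f) with hRdef
  have hsplit : ∀ f : D, K f + t • T f = (K f + s • T f) + (t - s) • T f := by
    intro f
    rw [sub_smul]; abel
  have h0R : (0 : H) ∈ R := ⟨0, by simp⟩
  have hne : R.Nonempty := ⟨0, h0R⟩
  -- key estimate: every `h` can be approximated by an element of `R` up to `q‖h‖`
  have key : ∀ h : H, ∀ ε > (0:ℝ), ∃ w ∈ R, ‖h - w‖ ≤ q * ‖h‖ + ε := by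
    intro h ε hε
    have hε' : (0:ℝ) < ε / (1 + q) := div_pos hε (by linarith)
    obtain ⟨y, ⟨f, rfl⟩, hy⟩ := Metric.mem_closure_iff.mp (hdense h) _ hε'
    refine ⟨(f : H) - (K f + t • T f), ⟨f, rfl⟩, ?_⟩
    have hTf : ‖T f‖ ≤ M * ‖(f : H) - (K f + s • T f)‖ := hM f
    have hyn : ‖h - ((f : H) - (K f + s • T f))‖ < ε / (1 + q) := by
      rwa [dist_eq_norm] at hy
    have hgn : ‖(f : H) - (K f + s • T f)‖ ≤ ‖h‖ + ε / (1 + q) := by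
      have h1 := norm_sub_norm_le ((f : H) - (K f + s • T f)) h
      have h2 : ‖(f : H) - (K f + s • T f) - h‖ = ‖h - ((f : H) - (K f + s • T f))‖ :=
        norm_sub_rev _ _
      linarith
    have hrw : h - ((f : H) - (K f + t • T f))
        = (h - ((f : H) - (K f + s • T f))) + (t - s) • T f := by
      rw [hsplit f]; abel
    calc ‖h - ((f : H) - (K f + t • T f))‖
        ≤ ‖h - ((f : H) - (K f + s • T f))‖ + ‖(t - s) • T f‖ := by
          rw [hrw]; exact norm_add_le _ _
      _ ≤ ε / (1 + q) + |t - s| * (M * ‖(f : H) - (K f + s • T f)‖) := by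
          rw [norm_smul, Real.norm_eq_abs]
          have := mul_le_mul_of_nonneg_left hTf (abs_nonneg (t - s))
          linarith
      _ ≤ ε / (1 + q) + q * (‖h‖ + ε / (1 + q)) := by
          rw [hqdef, mul_assoc]
          have := mul_le_mul_of_nonneg_left hgn hq0
          nlinarith
      _ = q * ‖h‖ + (1 + q) * (ε / (1 + q)) := by ring
      _ ≤ q * ‖h‖ + ε := by
          rw [mul_div_cancel₀ _ (by linarith : (1:ℝ) + q ≠ 0)]
  -- R is closed under addition
  have hadd : ∀ v w : H, v ∈ R → w ∈ R → v + w ∈ R := by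
    rintro _ _ ⟨f, rfl⟩ ⟨g, rfl⟩
    exact ⟨f + g, by push_cast [map_add, smul_add]; abel⟩
  -- show infDist is zero for every point
  intro h
  rw [Metric.mem_closure_iff_infDist_zero hne]
  set d : ℝ := Metric.infDist h R with hddef
  have hd0 : 0 ≤ d := Metric.infDist_nonneg
  have hiter : ∀ ε > (0:ℝ), d ≤ q * d + (q + 1) * ε := by
    intro ε hε
    obtain ⟨v, hvR, hv⟩ := (Metric.infDist_lt_iff hne).mp
      (show Metric.infDist h R < d + ε by rw [← hddef]; linarith)
    rw [dist_eq_norm] at hv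
    obtain ⟨w, hwR, hw⟩ := key (h - v) ε hε
    have hvw : v + w ∈ R := hadd v w hvR hwR
    have : d ≤ ‖h - (v + w)‖ := by
      rw [hddef, ← dist_eq_norm]
      exact Metric.infDist_le_dist_of_mem hvw
    have heq : h - (v + w) = (h - v) - w := by abel
    rw [heq] at this
    have hqv : q * ‖h - v‖ ≤ q * (d + ε) := mul_le_mul_of_nonneg_left hv.le hq0
    linarith
  have hdq : d ≤ q * d := by
    by_contra hcon
    push_neg at hcon
    have hpos : 0 < d - q * d := by linarith
    have := hiter ((d - q * d) / (2 * (q + 1))) (by positivity)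
    have h1 : (q + 1) * ((d - q * d) / (2 * (q + 1))) = (d - q * d) / 2 := by
      field_simp
    rw [h1] at this
    linarith
  nlinarith

/-- The uniform bound `‖Tf‖ ≤ √(|c₁| + c₂) * ‖f - (K + s•T)f‖` for `s ≥ 0`. -/
lemma stmt16_Tbound {H : Type*} [NormedAddCommGroup H] [InnerProductSpace ℝ H]
    (D : Submodule ℝ H) (K T : D →ₗ[ℝ] H)
    (hKdiss : ∀ f : D, ⟪K f, (f : H)⟫ ≤ 0)
    (hTdiss : ∀ f : D, ⟪T f, (f : H)⟫ ≤ 0)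
    (c₁ c₂ : ℝ) (hc₂ : 0 ≤ c₂)
    (hbound : ∀ f : D, ‖T f‖ ^ 2 ≤ c₁ * ⟪K f, (f : H)⟫ + c₂ * ‖(f : H)‖ ^ 2)
    (s : ℝ) (hs : 0 ≤ s) (f : D) :
    ‖T f‖ ≤ Real.sqrt (|c₁| + c₂) * ‖(f : H) - (K f + s • T f)‖ := by
  set g : H := (f : H) - (K f + s • T f) with hgdef
  have hinner : ⟪g, (f : H)⟫ = ‖(f : H)‖ ^ 2 - ⟪K f, (f : H)⟫ - s * ⟪T f, (f : H)⟫ := by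
    rw [hgdef, inner_sub_left, inner_add_left, real_inner_smul_left,
      real_inner_self_eq_norm_sq]
    ring
  have hle : ⟪g, (f : H)⟫ ≤ ‖g‖ * ‖(f : H)‖ := real_inner_le_norm g (f : H)
  have hsT : 0 ≤ -(s * ⟪T f, (f : H)⟫) := by
    have := mul_nonpos_of_nonneg_of_nonpos hs (hTdiss f)
    linarith
  have hK0 : ⟪K f, (f : H)⟫ ≤ 0 := hKdiss f
  -- ‖f‖ ≤ ‖g‖
  have hfg : ‖(f : H)‖ ≤ ‖g‖ := by
    nlinarith [norm_nonneg (f : H), norm_nonneg g]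
  -- -⟪Kf,f⟫ ≤ ‖g‖²
  have hKg : -⟪K f, (f : H)⟫ ≤ ‖g‖ ^ 2 := by
    nlinarith [norm_nonneg (f : H), norm_nonneg g]
  have hT2 : ‖T f‖ ^ 2 ≤ (|c₁| + c₂) * ‖g‖ ^ 2 := by
    have h1 : c₁ * ⟪K f, (f : H)⟫ ≤ |c₁| * (-⟪K f, (f : H)⟫) := by
      rcases abs_cases c₁ with ⟨h, _⟩ | ⟨h, _⟩ <;> nlinarith
    have h2 : |c₁| * (-⟪K f, (f : H)⟫) ≤ |c₁| * ‖g‖ ^ 2 :=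
      mul_le_mul_of_nonneg_left hKg (abs_nonneg c₁)
    have h3 : c₂ * ‖(f : H)‖ ^ 2 ≤ c₂ * ‖g‖ ^ 2 := by
      have hsq : ‖(f : H)‖ ^ 2 ≤ ‖g‖ ^ 2 := by nlinarith [norm_nonneg (f : H), norm_nonneg g]
      exact mul_le_mul_of_nonneg_left hsq hc₂
    have := hbound f
    nlinarith
  have h4 : ‖T f‖ = Real.sqrt (‖T f‖ ^ 2) := (Real.sqrt_sq (norm_nonneg _)).symm
  rw [h4]
  calc Real.sqrt (‖T f‖ ^ 2) ≤ Real.sqrt ((|c₁| + c₂) * ‖g‖ ^ 2) := Real.sqrt_le_sqrt hT2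
    _ = Real.sqrt (|c₁| + c₂) * ‖g‖ := by
        rw [Real.sqrt_mul (by positivity), Real.sqrt_sq (norm_nonneg g)]

/-- Kato-type perturbation: if `(K, D)` is essentially m-dissipative (dissipative with
`(1 - K)(D)` dense), `(T, D)` is dissipative, and `‖Tf‖² ≤ c₁(Kf, f) + c₂‖f‖²` on `D`,
then `(K + T, D)` is essentially m-dissipative. -/
theorem stmt16 {H : Type*} [NormedAddCommGroup H] [InnerProductSpace ℝ H] [CompleteSpace H]
    (D : Submodule ℝ H) (hDdense : Dense (D : Set H))
    (K T : D →ₗ[ℝ] H)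
    (hKdiss : ∀ f : D, ⟪K f, (f : H)⟫ ≤ 0)
    (hKrange : Dense (Set.range fun f : D => (f : H) - K f))
    (hTdiss : ∀ f : D, ⟪T f, (f : H)⟫ ≤ 0)
    (c₁ c₂ : ℝ) (hc₂ : 0 ≤ c₂)
    (hbound : ∀ f : D, ‖T f‖ ^ 2 ≤ c₁ * ⟪K f, (f : H)⟫ + c₂ * ‖(f : H)‖ ^ 2) :
    (∀ f : D, ⟪K f + T f, (f : H)⟫ ≤ 0) ∧
      Dense (Set.range fun f : D => (f : H) - (K f + T f)) := by
  constructor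
  · intro f
    rw [inner_add_left]
    exact add_nonpos (hKdiss f) (hTdiss f)
  set M : ℝ := Real.sqrt (|c₁| + c₂) with hMdef
  have hM0 : 0 ≤ M := Real.sqrt_nonneg _
  set r : ℝ := 1 / (2 * (M + 1)) with hrdef
  have hr0 : 0 < r := by positivity
  have hrM : r * M < 1 := by
    rw [hrdef]
    rw [div_mul_eq_mul_div, div_lt_one (by linarith)]
    nlinarith
  -- main induction along the parameter
  have main : ∀ k : ℕ, Dense (Set.range fun f : D =>
      (f : H) - (K f + (min ((k : ℝ) * r) 1) • T f)) := by
    intro k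
    induction k with
    | zero =>
      simpa [min_eq_left (zero_le_one' ℝ)] using hKrange
    | succ k ih =>
      set sk : ℝ := min ((k : ℝ) * r) 1 with hskdef
      set tk : ℝ := min (((k : ℝ) + 1) * r) 1 with htkdef
      have hsk0 : 0 ≤ sk := le_min (by positivity) zero_le_one
      have hdiff : 0 ≤ tk - sk ∧ tk - sk ≤ r := by
        constructor
        · have : sk ≤ tk := min_le_min (by nlinarith) le_rfl
          linarith
        · rcases le_total ((k : ℝ) * r) 1 with h | h
          · have h1 : tk ≤ ((k : ℝ) + 1) * r := min_le_left _ _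
            have h2 : sk = (k : ℝ) * r := min_eq_left h
            rw [h2]; nlinarith
          · have h1 : sk = 1 := min_eq_right h
            have h2 : tk ≤ 1 := min_le_right _ _
            rw [h1]; linarith
      have habs : |tk - sk| * M < 1 := by
        rw [abs_of_nonneg hdiff.1]
        calc (tk - sk) * M ≤ r * M := mul_le_mul_of_nonneg_right hdiff.2 hM0
          _ < 1 := hrM
      have hbnd : ∀ f : D, ‖T f‖ ≤ M * ‖(f : H) - (K f + sk • T f)‖ := fun f =>
        stmt16_Tbound D K T hKdiss hTdiss c₁ c₂ hc₂ hbound sk hsk0 f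
      have := stmt16_step D K T M sk tk hM0 hbnd habs ih
      simpa [htkdef, Nat.cast_succ] using this
  obtain ⟨N, hN⟩ := exists_nat_ge (1 / r)
  have hNr : 1 ≤ (N : ℝ) * r := by
    rw [div_le_iff₀ hr0] at hN
    linarith
  have := main N
  rw [min_eq_right hNr] at this
  simpa [one_smul] using this
end
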